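/- Let M be a matroid on a finite ground set U, let L be a list enumerating every element of U exactly once (an arrival order), and for R ⊆ U define the greedy output A(R) ⊆ U as follows: starting from A = ∅, process the elements e of L in order, and add e to A whenever e ∈ R and A ∪ {e} is independent in M. Let x : U → [0,1] and let μ be the product probability measure on the powerset of U in which each subset R₀ ⊆ U has probability μ({R₀}) = ∏_{e∈R₀} x(e) · ∏_{e∈U\R₀} (1 − x(e)) (each element included independently with probability x(e)). Then for every e ∈ U, μ{ R ⊆ U : e ∈ A(R) } ≥ x(e) · (1 − μ{ R ⊆ U : e ∈ span(R \ {e}) }). -/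

import Mathlib

open Classical

/-- A matroid on a finite ground set `α`, given by its independent sets. -/
structure FinMatroid (α : Type*) [DecidableEq α] [Fintype α] where
  /-- The independent sets. -/
  Indep : Finset α → Prop
  indep_empty : Indep ∅
  indep_subset : ∀ ⦃I J : Finset α⦄, Indep J → I ⊆ J → Indep I
  indep_exchange : ∀ ⦃I J : Finset α⦄, Indep I → Indep J → I.card < J.card →
    ∃ e ∈ J, e ∉ I ∧ Indep (insert e I)

namespace FinMatroid

variable {α : Type*} [DecidableEq α] [Fintype α]

/-- A basis of the matroid: a maximal independent set. -/
def Base (M : FinMatroid α) (B : Finset α) : Prop :=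
  M.Indep B ∧ ∀ e : α, e ∉ B → ¬ M.Indep (insert e B)

/-- The rank of a set: the size of a largest independent subset. -/
noncomputable def rank (M : FinMatroid α) (S : Finset α) : ℕ :=
  (S.powerset.filter M.Indep).sup Finset.card

/-- The span of a set: the elements whose insertion does not increase the rank. -/
noncomputable def span (M : FinMatroid α) (S : Finset α) : Finset α :=
  Finset.univ.filter fun e => M.rank (insert e S) = M.rank S

end FinMatroid

namespace FinMatroid

variable {α : Type*} [DecidableEq α] [Fintype α]

/-- The greedy algorithm: process the elements of the list `L` in order, starting from
`∅`, and take an arriving element `e` whenever `e ∈ R` and this keeps the current set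
independent. -/
noncomputable def greedy (M : FinMatroid α) (R : Finset α) (L : List α) : Finset α :=
  L.foldl (fun A e => if e ∈ R ∧ M.Indep (insert e A) then insert e A else A) ∅

end FinMatroid

namespace FinMatroid

variable {α : Type*} [DecidableEq α] [Fintype α]

lemma rank_mono (M : FinMatroid α) {S T : Finset α} (h : S ⊆ T) : M.rank S ≤ M.rank T := by
  apply Finset.sup_mono
  intro I hI
  simp only [Finset.mem_filter, Finset.mem_powerset] at hI ⊢
  exact ⟨hI.1.trans h, hI.2⟩

lemma card_le_rank (M : FinMatroid α) {I S : Finset α} (hI : M.Indep I) (hIS : I ⊆ S) :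
    I.card ≤ M.rank S :=
  Finset.le_sup (by simp [Finset.mem_filter, Finset.mem_powerset, hI, hIS])

lemma exchange_grow (M : FinMatroid α) :
    ∀ (n : ℕ) (A J : Finset α), M.Indep A → M.Indep J → J.card ≤ A.card + n →
      ∃ B, M.Indep B ∧ A ⊆ B ∧ B ⊆ A ∪ J ∧ J.card ≤ B.card := by
  intro n
  induction n with
  | zero => intro A J hA _ h; exact ⟨A, hA, le_refl _, Finset.subset_union_left, by omega⟩
  | succ n ih =>
    intro A J hA hJ h
    by_cases hc : J.card ≤ A.card
    · exact ⟨A, hA, le_refl _, Finset.subset_union_left, hc⟩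
    · obtain ⟨f, hfJ, hfA, hfI⟩ := M.indep_exchange hA hJ (by omega)
      obtain ⟨B, hB, hAB, hBU, hcard⟩ := ih (insert f A) J hfI hJ
        (by rw [Finset.card_insert_of_notMem hfA]; omega)
      refine ⟨B, hB, (Finset.subset_insert f A).trans hAB, ?_, hcard⟩
      intro g hg
      rcases Finset.mem_union.1 (hBU hg) with hg' | hg'
      · rcases Finset.mem_insert.1 hg' with rfl | hg''
        · exact Finset.mem_union_right _ hfJ
        · exact Finset.mem_union_left _ hg''
      · exact Finset.mem_union_right _ hg'

lemma insert_indep_of_not_span (M : FinMatroid α) {A S : Finset α} {e : α}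
    (hA : M.Indep A) (hAS : A ⊆ S) (he : M.rank (insert e S) ≠ M.rank S) :
    M.Indep (insert e A) := by
  have hmono : M.rank S ≤ M.rank (insert e S) := M.rank_mono (Finset.subset_insert e S)
  have hlt : M.rank S < M.rank (insert e S) := lt_of_le_of_ne hmono (Ne.symm he)
  -- get a maximizer J for rank (insert e S)
  obtain ⟨J, hJmem, hJeq⟩ := Finset.exists_mem_eq_sup
    ((insert e S).powerset.filter M.Indep)
    ⟨∅, by simp [M.indep_empty]⟩ Finset.card
  simp only [Finset.mem_filter, Finset.mem_powerset] at hJmem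
  obtain ⟨hJsub, hJindep⟩ := hJmem
  have hJcard : M.rank (insert e S) = J.card := hJeq
  have hAcard : A.card ≤ M.rank S := M.card_le_rank hA hAS
  obtain ⟨B, hB, hAB, hBU, hcard⟩ := M.exchange_grow (J.card - A.card) A J hA hJindep (by omega)
  have heB : e ∈ B := by
    by_contra heB
    have hBS : B ⊆ S := by
      intro g hg
      rcases Finset.mem_union.1 (hBU hg) with hg' | hg'
      · exact hAS hg'
      · rcases Finset.mem_insert.1 (hJsub hg') with rfl | hg''
        · exact absurd hg heB
        · exact hg''
    have := M.card_le_rank hB hBS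
    omega
  exact M.indep_subset hB (Finset.insert_subset heB hAB)

/-- The greedy step function. -/
noncomputable def step (M : FinMatroid α) (R : Finset α) : Finset α → α → Finset α :=
  fun A e => if e ∈ R ∧ M.Indep (insert e A) then insert e A else A

lemma mem_foldl_of_mem (M : FinMatroid α) (R : Finset α) {e : α} :
    ∀ (L : List α) (A : Finset α), e ∈ A → e ∈ L.foldl (M.step R) A := by
  intro L
  induction L with
  | nil => intro A h; exact h
  | cons a L ih =>
    intro A h
    apply ih
    unfold step
    split
    · exact Finset.mem_insert_of_mem h
    · exact h

lemma indep_foldl (M : FinMatroid α) (R : Finset α) :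
    ∀ (L : List α) (A : Finset α), M.Indep A → M.Indep (L.foldl (M.step R) A) := by
  intro L
  induction L with
  | nil => intro A h; exact h
  | cons a L ih =>
    intro A h
    apply ih
    unfold step
    split
    · exact (by assumption : a ∈ R ∧ M.Indep (insert a A)).2
    · exact h

lemma foldl_subset (M : FinMatroid α) (R : Finset α) :
    ∀ (L : List α) (A : Finset α), L.foldl (M.step R) A ⊆ A ∪ (R ∩ L.toFinset) := by
  intro L
  induction L with
  | nil => intro A; simp
  | cons a L ih =>
    intro A
    refine (ih (M.step R A a)).trans ?_
    intro g hg
    rcases Finset.mem_union.1 hg with hg' | hg'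
    · unfold step at hg'
      split at hg'
      · rcases Finset.mem_insert.1 hg' with rfl | hg''
        · exact Finset.mem_union_right _ (Finset.mem_inter.2
            ⟨(by assumption : g ∈ R ∧ _).1, by simp⟩)
        · exact Finset.mem_union_left _ hg''
      · exact Finset.mem_union_left _ hg'
    · have := Finset.mem_inter.1 hg'
      exact Finset.mem_union_right _ (Finset.mem_inter.2 ⟨this.1, by simp [this.2]⟩)

lemma mem_greedy_of_not_span (M : FinMatroid α) {R : Finset α} {L : List α} {e : α}
    (hnodup : L.Nodup) (heL : e ∈ L) (heR : e ∈ R)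
    (hspan : e ∉ M.span (R.erase e)) : e ∈ M.greedy R L := by
  obtain ⟨L1, L2, rfl⟩ := List.append_of_mem heL
  have heL1 : e ∉ L1 :=
    fun h => (List.disjoint_of_nodup_append hnodup) h List.mem_cons_self
  have hgr : M.greedy R (L1 ++ e :: L2)
      = (e :: L2).foldl (M.step R) (L1.foldl (M.step R) ∅) := by
    unfold greedy step
    rw [List.foldl_append]
  set A := L1.foldl (M.step R) ∅ with hA
  have hAindep : M.Indep A := M.indep_foldl R L1 ∅ M.indep_empty
  have hAsub : A ⊆ R.erase e := by
    intro g hg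
    have := M.foldl_subset R L1 ∅ hg
    rw [Finset.empty_union, Finset.mem_inter] at this
    refine Finset.mem_erase.2 ⟨?_, this.1⟩
    rintro rfl
    exact heL1 (List.mem_toFinset.1 this.2)
  have hrank : M.rank (insert e (R.erase e)) ≠ M.rank (R.erase e) := by
    intro h
    exact hspan (Finset.mem_filter.2 ⟨Finset.mem_univ e, h⟩)
  have hins : M.Indep (insert e A) := M.insert_indep_of_not_span hAindep hAsub hrank
  rw [hgr, List.foldl_cons]
  apply M.mem_foldl_of_mem
  unfold step
  rw [if_pos ⟨heR, hins⟩]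
  exact Finset.mem_insert_self e A

end FinMatroid

/-- Selectability of the greedy algorithm: if each element is active independently with
probability `x e`, then `Pr[e ∈ greedy(R)] ≥ x e · (1 - Pr[e ∈ span(R \ {e})])`. -/
theorem stmt_13 {α : Type*} [DecidableEq α] [Fintype α] (M : FinMatroid α)
    (L : List α) (hnodup : L.Nodup) (hall : ∀ x : α, x ∈ L)
    (x : α → ℝ) (hx0 : ∀ e : α, 0 ≤ x e) (hx1 : ∀ e : α, x e ≤ 1) :
    let μ : Finset α → ℝ := fun R => (∏ e ∈ R, x e) * ∏ e ∈ Rᶜ, (1 - x e)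
    ∀ e : α,
      x e * (1 - ∑ R : Finset α, if e ∈ M.span (R.erase e) then μ R else 0) ≤
        ∑ R : Finset α, if e ∈ M.greedy R L then μ R else 0 := by
  intro μ e
  have hμ0 : ∀ R : Finset α, 0 ≤ μ R := fun R =>
    mul_nonneg (Finset.prod_nonneg fun f _ => hx0 f)
      (Finset.prod_nonneg fun f _ => sub_nonneg.2 (hx1 f))
  have hsum1 : ∑ R : Finset α, μ R = 1 := by
    have h := Finset.prod_add x (fun f => 1 - x f) (Finset.univ : Finset α)
    simp only [add_sub_cancel, Finset.prod_const_one, Finset.powerset_univ] at h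
    rw [h]
    apply Finset.sum_congr rfl
    intro R _
    simp [μ, Finset.compl_eq_univ_sdiff]
  -- rewrite LHS
  have hL : x e * (1 - ∑ R : Finset α, if e ∈ M.span (R.erase e) then μ R else 0)
      = ∑ R : Finset α, (if e ∉ M.span (R.erase e) then x e * μ R else 0) := by
    rw [← hsum1, ← Finset.sum_sub_distrib, Finset.mul_sum]
    apply Finset.sum_congr rfl
    intro R _
    by_cases h : e ∈ M.span (R.erase e) <;> simp [h]
  rw [hL]
  -- pairing identity
  have hpair : ∀ f : Finset α → ℝ, ∑ R : Finset α, f R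
      = ∑ S ∈ (Finset.univ.erase e).powerset, (f S + f (insert e S)) := by
    intro f
    conv_lhs => rw [← Finset.powerset_univ (α := α),
      ← Finset.insert_erase (Finset.mem_univ e)]
    rw [Finset.sum_powerset_insert (Finset.notMem_erase e _), ← Finset.sum_add_distrib]
  have key : ∑ R : Finset α, (if e ∉ M.span (R.erase e) then x e * μ R else 0)
      = ∑ R : Finset α, (if e ∈ R ∧ e ∉ M.span (R.erase e) then μ R else 0) := by
    rw [hpair, hpair fun R => if e ∈ R ∧ e ∉ M.span (R.erase e) then μ R else 0]
    apply Finset.sum_congr rfl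
    intro S hS
    have heS : e ∉ S := fun h =>
      Finset.notMem_erase e Finset.univ ((Finset.mem_powerset.1 hS) h)
    have h1 : (insert e S).erase e = S := Finset.erase_insert heS
    have h2 : S.erase e = S := Finset.erase_eq_of_notMem heS
    have hμ : x e * (μ S + μ (insert e S)) = μ (insert e S) := by
      have hc : Sᶜ = insert e ((insert e S)ᶜ) := by
        rw [Finset.compl_insert, Finset.insert_erase (Finset.mem_compl.2 heS)]
      have hp1 : ∏ f ∈ insert e S, x f = x e * ∏ f ∈ S, x f :=
        Finset.prod_insert heS
      have hp2 : ∏ f ∈ Sᶜ, (1 - x f)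
          = (1 - x e) * ∏ f ∈ (insert e S)ᶜ, (1 - x f) := by
        rw [hc, Finset.prod_insert (by simp [Finset.mem_compl])]
      simp only [μ, hp1, hp2]
      ring
    simp only [h1, h2]
    by_cases h : e ∈ M.span S
    · simp [h, heS]
    · simp [h, heS]
      linear_combination hμ
  rw [key]
  apply Finset.sum_le_sum
  intro R _
  by_cases h : e ∈ R ∧ e ∉ M.span (R.erase e)
  · rw [if_pos h, if_pos (M.mem_greedy_of_not_span hnodup (hall e) h.1 h.2)]
  · rw [if_neg h]
    split
    · exact hμ0 R
    · exact le_refl 0
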